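/- Let L be the (K,D) AIR matrix. Suppose L(j,k)=1 lies in the even-submatrix I_{λ_{2i} × β_{2i}λ_{2i}} for some i ∈ [0, ⌊l/2⌋], and the column index of this entry within the submatrix satisfies k_R = cλ_{2i} + d with 0 ≤ d < λ_{2i}. Then the up-distance of L(j,k) equals λ_{2i−1} − cλ_{2i}. -/
import Mathlib

/-- Entry (j,k) of the AIR matrix of size K × n (n = K - D), as a Boolean. -/
def airEntry : ℕ → ℕ → ℕ → ℕ → Bool
  | K, n, j, k =>
    if h : n = 0 ∨ K ≤ n then decide (j = k)
    else
      if j < K - K % n then decide (j % n = k % n)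
      else
        if k < n - n % (K % n) then decide (k % (K % n) = j - (K - K % n))
        else airEntry (K % n) (n % (K % n)) (j - (K - K % n)) (k - (n - n % (K % n)))
  termination_by K n _ _ => K
  decreasing_by
    push_neg at h
    exact lt_trans (Nat.mod_lt _ (Nat.pos_of_ne_zero h.1)) h.2

/-- The pair (λ_{i-1}, λ_i) of the Euclidean chain, with λ_{-1} = K - D and λ₀ = D. -/
def lamPair (K D : ℕ) : ℕ → ℕ × ℕ
  | 0 => (K - D, D)
  | i + 1 =>
    let p := lamPair K D i
    (p.2, if p.2 = 0 then 0 else p.1 % p.2)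

/-- λ_i of the Euclidean chain. -/
def lam (K D i : ℕ) : ℕ := (lamPair K D i).2

/-- λ_{i-1} of the Euclidean chain (so `lamS K D 0 = K - D`). -/
def lamS (K D i : ℕ) : ℕ := (lamPair K D i).1

/-- β_i = λ_{i-1} / λ_i of the Euclidean chain. -/
def beta (K D i : ℕ) : ℕ := (lamPair K D i).1 / (lamPair K D i).2

/-- down-distance of the diagonal entry L(k,k) of the K × n AIR matrix. -/
noncomputable def ddown (K n k : ℕ) : ℕ :=
  sSup {t : ℕ | 0 < t ∧ k + t < K ∧ airEntry K n (k + t) k = true}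

/-- up-distance of the entry L(j,k) of the K × n AIR matrix. -/
noncomputable def dup (K n j k : ℕ) : ℕ :=
  j - sSup {j' : ℕ | j' < j ∧ airEntry K n j' k = true}

/-- right-distance of the entry L(j,k) of the K × n AIR matrix. -/
noncomputable def dright (K n j k : ℕ) : ℕ :=
  sInf {t : ℕ | 0 < t ∧ k + t < n ∧ airEntry K n j (k + t) = true}

/-! ### Auxiliary chain for the matrix recursion -/

/-- `(A_t, B_t)` with `A_0 = K`, `B_0 = n`, `A_{t+1} = A_t % B_t`, `B_{t+1} = B_t % A_{t+1}`. -/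
def ab (K n : ℕ) : ℕ → ℕ × ℕ
  | 0 => (K, n)
  | t + 1 => ((ab K n t).1 % (ab K n t).2, (ab K n t).2 % ((ab K n t).1 % (ab K n t).2))

lemma ab_shift (K n t : ℕ) : ab (K % n) (n % (K % n)) t = ab K n (t + 1) := by
  induction t with
  | zero => rfl
  | succ t ih => simp only [ab, ih]

lemma abA_anti (K n : ℕ) {s t : ℕ} (h : s ≤ t) : (ab K n t).1 ≤ (ab K n s).1 := by
  induction h with
  | refl => exact le_refl _
  | step _ ih => exact le_trans (Nat.mod_le _ _) ih

lemma abB_anti (K n : ℕ) {s t : ℕ} (h : s ≤ t) : (ab K n t).2 ≤ (ab K n s).2 := by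
  induction h with
  | refl => exact le_refl _
  | step _ ih => exact le_trans (Nat.mod_le _ _) ih

lemma twoB (K n t : ℕ) (hB : 0 < (ab K n (t+1)).2) (hr : 0 < (ab K n (t+2)).1) :
    2 * (ab K n (t+1)).2 < (ab K n t).2 := by
  have hA1 : 0 < (ab K n (t+1)).1 :=
    lt_of_lt_of_le hr (abA_anti K n (by omega))
  have hB0 : 0 < (ab K n t).2 := lt_of_lt_of_le hB (abB_anti K n (by omega))
  have h1 : (ab K n (t+1)).1 < (ab K n t).2 := by
    show (ab K n t).1 % (ab K n t).2 < (ab K n t).2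
    exact Nat.mod_lt _ hB0
  have h2 : (ab K n (t+1)).2 < (ab K n (t+1)).1 := by
    show (ab K n t).2 % (ab K n (t+1)).1 < (ab K n (t+1)).1
    exact Nat.mod_lt _ hA1
  have h3 : (ab K n (t+1)).2 ≤ (ab K n t).2 - (ab K n (t+1)).1 := by
    show (ab K n t).2 % (ab K n (t+1)).1 ≤ _
    rw [Nat.mod_eq_sub_mod (le_of_lt h1)]
    exact Nat.mod_le _ _
  omega

/-! ### The main structural lemma -/

lemma gen : ∀ (t K n j k c d : ℕ), 0 < n → n < K →
    0 < (ab K n t).2 → 0 < (ab K n (t+1)).1 →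
    k = (n - (ab K n t).2) + (c * (ab K n (t+1)).1 + d) →
    c * (ab K n (t+1)).1 + d < (ab K n t).2 - (ab K n t).2 % (ab K n (t+1)).1 →
    d < (ab K n (t+1)).1 →
    K - (ab K n (t+1)).1 ≤ j → j < K →
    airEntry K n j k = true →
    ∃ p, j = p + ((ab K n t).2 - c * (ab K n (t+1)).1) ∧
      c * (ab K n (t+1)).1 < (ab K n t).2 ∧
      IsGreatest {j' | j' < j ∧ airEntry K n j' k = true} p := by
  intro t
  induction t with
  | zero =>
    intro K n j k c d hn hnK hB hr hk hw hd hj1 hj2 he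
    simp only [ab] at hB hr hk hw hd hj1 ⊢
    have hKn : ¬(n = 0 ∨ K ≤ n) := by omega
    have hrn : K % n < n := Nat.mod_lt _ hn
    have hnr : n % (K % n) ≤ n := Nat.mod_le _ _
    have hkn : k < n := by omega
    have hq := Nat.div_add_mod K n
    have hq1 : 0 < K / n := Nat.div_pos hnK.le hn
    have hmul : n * (K / n - 1) + n = n * (K / n) := by
      rw [← Nat.mul_succ]
      congr 1
      omega
    have hkr : k % (K % n) = d := by
      have : k = c * (K % n) + d := by omega
      rw [this, Nat.add_comm, Nat.add_mul_mod_self_right]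
      exact Nat.mod_eq_of_lt hd
    rw [airEntry, dif_neg hKn, if_neg (by omega), if_pos (by omega)] at he
    have hjd : j = (K - K % n) + d := by
      have := of_decide_eq_true he
      omega
    have hknn : k % n = k := Nat.mod_eq_of_lt hkn
    refine ⟨k + n * (K / n - 1), by omega, by omega, ⟨⟨by omega, ?_⟩, ?_⟩⟩
    · rw [airEntry, dif_neg hKn, if_pos (by omega)]
      have : (k + n * (K / n - 1)) % n = k % n := by
        rw [Nat.mul_comm, Nat.add_mul_mod_self_right]
      simp [this]
    · rintro x ⟨hx1, hx2⟩
      rw [airEntry, dif_neg hKn] at hx2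
      by_cases hxtop : x < K - K % n
      · rw [if_pos hxtop] at hx2
        have hx3 : x % n = k % n := of_decide_eq_true hx2
        have hxd := Nat.div_add_mod x n
        have h1 : n * (x / n) < n * (K / n) := by omega
        have h2 : x / n < K / n := Nat.lt_of_mul_lt_mul_left h1
        have h3 : n * (x / n) ≤ n * (K / n - 1) := Nat.mul_le_mul_left n (by omega)
        omega
      · rw [if_neg hxtop, if_pos (by omega)] at hx2
        have := of_decide_eq_true hx2
        omega
  | succ t ih =>
    intro K n j k c d hn hnK hB hr hk hw hd hj1 hj2 he
    have hKn : ¬(n = 0 ∨ K ≤ n) := by omega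
    have hA1 : 0 < K % n := by
      have h := abA_anti K n (show 1 ≤ t+1+1 by omega)
      have h1 : (ab K n 1).1 = K % n := rfl
      omega
    have hn'pos : 0 < n % (K % n) := by
      have h := abB_anti K n (show 1 ≤ t+1 by omega)
      have h1 : (ab K n 1).2 = n % (K % n) := rfl
      omega
    have hn'K' : n % (K % n) < K % n := Nat.mod_lt _ hA1
    have hBn' : (ab K n (t+1)).2 ≤ n % (K % n) := by
      have h := abB_anti K n (show 1 ≤ t+1 by omega)
      have h1 : (ab K n 1).2 = n % (K % n) := rfl
      omega
    have hrK' : (ab K n (t+1+1)).1 ≤ K % n := by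
      have h := abA_anti K n (show 1 ≤ t+1+1 by omega)
      have h1 : (ab K n 1).1 = K % n := rfl
      omega
    have hn'n : n % (K % n) ≤ n := Nat.mod_le _ _
    have hrn : K % n < n := Nat.mod_lt _ hn
    have hKnK : K % n < K := lt_trans hrn hnK
    have hkge : n - n % (K % n) ≤ k := by omega
    have hjge : K - K % n ≤ j := by omega
    have he' : airEntry (K % n) (n % (K % n)) (j - (K - K % n)) (k - (n - n % (K % n))) = true := by
      rw [airEntry, dif_neg hKn, if_neg (by omega), if_neg (by omega)] at he
      exact he
    have hsh0 : ab (K % n) (n % (K % n)) t = ab K n (t+1) := ab_shift K n t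
    have hsh1 : ab (K % n) (n % (K % n)) (t+1) = ab K n (t+1+1) := ab_shift K n (t+1)
    obtain ⟨p', hp'j, hcB, hg⟩ := ih (K % n) (n % (K % n)) (j - (K - K % n)) (k - (n - n % (K % n))) c d
      hn'pos hn'K' (by rw [hsh0]; exact hB) (by rw [hsh1]; exact hr)
      (by rw [hsh0, hsh1]; omega)
      (by rw [hsh0, hsh1]; exact hw) (by rw [hsh1]; exact hd)
      (by rw [hsh1]; omega) (by omega) he'
    rw [hsh0, hsh1] at hp'j hcB
    refine ⟨p' + (K - K % n), by omega, hcB, ⟨⟨by omega, ?_⟩, ?_⟩⟩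
    · rw [airEntry, dif_neg hKn, if_neg (by omega), if_neg (by omega)]
      have hpp : p' + (K - K % n) - (K - K % n) = p' := by omega
      rw [hpp]
      exact hg.1.2
    · rintro x ⟨hx1, hx2⟩
      by_cases hxtop : x < K - K % n
      · omega
      · rw [airEntry, dif_neg hKn, if_neg hxtop, if_neg (by omega)] at hx2
        have hle := hg.2 ⟨by omega, hx2⟩
        omega

lemma wrap (K n t j k c d : ℕ) (hn : 0 < n) (hnK : n < K)
    (hB : 0 < (ab K n t).2) (hr : 0 < (ab K n (t+1)).1)
    (hoff : k % (n - (ab K n t).2) = c * (ab K n (t+1)).1 + d)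
    (hk1 : n - (ab K n t).2 ≤ k)
    (hk2 : k < n - (ab K n t).2 + ((ab K n t).2 - (ab K n t).2 % (ab K n (t+1)).1))
    (hd : d < (ab K n (t+1)).1)
    (hj1 : K - (ab K n (t+1)).1 ≤ j) (hj2 : j < K)
    (he : airEntry K n j k = true) :
    dup K n j k = (ab K n t).2 - c * (ab K n (t+1)).1 := by
  have hmodle : (ab K n t).2 % (ab K n (t+1)).1 ≤ (ab K n t).2 := Nat.mod_le _ _
  have hk : k = (n - (ab K n t).2) + (c * (ab K n (t+1)).1 + d) := by
    rcases Nat.eq_zero_or_pos (n - (ab K n t).2) with h0 | h0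
    · rw [h0, Nat.mod_zero] at hoff
      omega
    · have h2B : (ab K n t).2 ≤ n - (ab K n t).2 := by
        rcases t with _ | t
        · have : (ab K n 0).2 = n := rfl
          omega
        · have h2 := twoB K n t hB hr
          have h3 : (ab K n t).2 ≤ (ab K n 0).2 := abB_anti K n (by omega)
          have h4 : (ab K n 0).2 = n := rfl
          omega
      have hlt : k - (n - (ab K n t).2) < n - (ab K n t).2 := by omega
      have hmod : k % (n - (ab K n t).2) = k - (n - (ab K n t).2) := by
        rw [Nat.mod_eq_sub_mod hk1, Nat.mod_eq_of_lt hlt]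
      omega
  obtain ⟨p, hpj, hcB, hg⟩ := gen t K n j k c d hn hnK hB hr hk (by omega) hd hj1 hj2 he
  have hsup : sSup {j' | j' < j ∧ airEntry K n j' k = true} = p := hg.csSup_eq
  simp only [dup, hsup]
  omega

lemma lamS_succ (K D s : ℕ) : lamS K D (s+1) = lam K D s := rfl

lemma lam_succ (K D s : ℕ) :
    lam K D (s+1) = if lam K D s = 0 then 0 else lamS K D s % lam K D s := rfl

lemma lamPair_step (K D s : ℕ) (h1 : lam K D (s+1) ≠ 0) (h2 : lam K D (s+2) ≠ 0) :
    lamPair K D (s+3) = ((lamPair K D (s+1)).1 % (lamPair K D (s+1)).2,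
      (lamPair K D (s+1)).2 % ((lamPair K D (s+1)).1 % (lamPair K D (s+1)).2)) := by
  have h3 : lamPair K D (s+3)
      = (lam K D (s+2), if lam K D (s+2) = 0 then 0 else lam K D (s+1) % lam K D (s+2)) := rfl
  have h4 : lam K D (s+2) = lam K D s % lam K D (s+1) := by
    rw [lam_succ, if_neg h1, lamS_succ]
  have h5 : (lamPair K D (s+1)).1 = lam K D s := rfl
  have h6 : (lamPair K D (s+1)).2 = lam K D (s+1) := rfl
  rw [h3, if_neg h2, h4, h5, h6]

lemma R1 (K D n : ℕ) (hD : 0 < D) (hne : K - D = n) (hDn : D < n) (hDK : D < K) :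
    ∀ t, (∀ s, s ≤ 2*t → lam K D s ≠ 0) → ab K n (t+1) = lamPair K D (2*t+1) := by
  intro t
  induction t with
  | zero =>
    intro _
    have hK : K = D + n := by omega
    have hKm : K % n = D := by
      rw [hK, Nat.add_mod_right]
      exact Nat.mod_eq_of_lt hDn
    have h1 : ab K n 1 = (K % n, n % (K % n)) := rfl
    have h2 : lamPair K D 1 = (D, (K - D) % D) := by
      show (D, if D = 0 then 0 else (K - D) % D) = _
      rw [if_neg hD.ne']
    rw [h1, hKm, h2, hne]
  | succ t ih =>
    intro hnz
    have hprev := ih (fun s hs => hnz s (by omega))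
    have hstep : ab K n (t+1+1) = ((ab K n (t+1)).1 % (ab K n (t+1)).2,
        (ab K n (t+1)).2 % ((ab K n (t+1)).1 % (ab K n (t+1)).2)) := rfl
    have hidx : 2*(t+1)+1 = 2*t+3 := by omega
    rw [hstep, hprev, hidx]
    exact (lamPair_step K D (2*t) (hnz _ (by omega)) (hnz _ (by omega))).symm

lemma R2 (K D n : ℕ) (hD : 0 < D) (hne : K - D = n) (hn : 0 < n) (hnD : n < D) :
    ∀ t, (∀ s, s ≤ 2*t+2 → lam K D s ≠ 0) → ab K n (t+1) = lamPair K D (2*t+3) := by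
  intro t
  induction t with
  | zero =>
    intro hnz
    have hK : K = D + n := by omega
    have hl1 : lam K D 1 = n := by
      show (if D = 0 then 0 else (K - D) % D) = n
      rw [if_neg hD.ne', hne]
      exact Nat.mod_eq_of_lt hnD
    have hKm : K % n = D % n := by
      rw [hK, Nat.add_mod_right]
    have h1 : ab K n 1 = (K % n, n % (K % n)) := rfl
    have h2 : lamPair K D 3 = (lam K D 2, if lam K D 2 = 0 then 0 else lam K D 1 % lam K D 2) := rfl
    have h3 : lam K D 2 = D % n := by
      rw [lam_succ, if_neg (hnz 1 (by omega)), lamS_succ, hl1]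
      show (lamPair K D 0).2 % n = D % n
      rfl
    rw [h1, h2, if_neg (hnz 2 (by omega)), h3, hl1, hKm]
  | succ t ih =>
    intro hnz
    have hprev := ih (fun s hs => hnz s (by omega))
    have hstep : ab K n (t+1+1) = ((ab K n (t+1)).1 % (ab K n (t+1)).2,
        (ab K n (t+1)).2 % ((ab K n (t+1)).1 % (ab K n (t+1)).2)) := rfl
    have hidx : 2*(t+1)+3 = 2*t+5 := by omega
    have hidx2 : (2*t+3) + 2 = 2*t+5 := by omega
    rw [hstep, hprev, hidx]
    have := lamPair_step K D (2*t+2) (hnz _ (by omega)) (hnz _ (by omega))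
    rw [hidx2] at this
    exact this.symm

/-- Lemma 2 (even submatrix): up-distance of an entry in I_{λ_{2i} × β_{2i}λ_{2i}}
with within-block column index k_R = cλ_{2i} + d. -/
theorem stmt7 (K D l i j k c d : ℕ) (hD : 0 < D) (hDK : D < K)
    (hl : lam K D (l + 1) = 0) (hmin : ∀ j ≤ l, lam K D j ≠ 0)
    (hi : 2 * i ≤ l)
    (hj1 : K - lam K D (2 * i) ≤ j) (hj2 : j < K)
    (hk1 : K - D - lamS K D (2 * i) ≤ k)
    (hk2 : k < K - D - lamS K D (2 * i) + beta K D (2 * i) * lam K D (2 * i))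
    (he : airEntry K (K - D) j k = true)
    (hcd : k % (K - D - lamS K D (2 * i)) = c * lam K D (2 * i) + d)
    (hd : d < lam K D (2 * i)) :
    dup K (K - D) j k = lamS K D (2 * i) - c * lam K D (2 * i) := by
  have hn : 0 < K - D := by omega
  have hnK : K - D < K := by omega
  have hnz : ∀ s, s ≤ 2*i → lam K D s ≠ 0 := fun s hs => hmin s (by omega)
  have hβ : beta K D (2*i) * lam K D (2*i)
      = lamS K D (2*i) - lamS K D (2*i) % lam K D (2*i) := by
    have h1 := Nat.div_add_mod (lamS K D (2*i)) (lam K D (2*i))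
    have h2 : beta K D (2*i) * lam K D (2*i)
        = lam K D (2*i) * (lamS K D (2*i) / lam K D (2*i)) := by
      rw [Nat.mul_comm]; rfl
    have h3 : lamS K D (2*i) % lam K D (2*i) ≤ lamS K D (2*i) := Nat.mod_le _ _
    omega
  rw [hβ] at hk2
  have hrpos : 0 < lam K D (2*i) := Nat.pos_of_ne_zero (hnz _ le_rfl)
  rcases lt_trichotomy D (K - D) with hDn | hDn | hDn
  · -- D < K - D : use level t = i
    have eqr : (ab K (K-D) (i+1)).1 = lam K D (2*i) := by
      rw [R1 K D (K-D) hD rfl hDn hDK i hnz]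
      rfl
    have eqB : (ab K (K-D) i).2 = lamS K D (2*i) := by
      cases i with
      | zero => rfl
      | succ m =>
        rw [R1 K D (K-D) hD rfl hDn hDK m (fun s hs => hnz s (by omega))]
        show lam K D (2*m+1) = lamS K D (2*(m+1))
        have h : 2*(m+1) = (2*m+1)+1 := by omega
        rw [h, lamS_succ]
    have hBpos : 0 < lamS K D (2*i) := by
      cases i with
      | zero => exact hn
      | succ m =>
        have h : 2*(m+1) = (2*m+1)+1 := by omega
        rw [h, lamS_succ]
        exact Nat.pos_of_ne_zero (hnz _ (by omega))
    rw [← eqB] at hk1 hk2 hcd ⊢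
    rw [← eqr] at hk2 hcd hd hj1 ⊢
    exact wrap K (K-D) i j k c d hn hnK (by rw [eqB]; exact hBpos)
      (by rw [eqr]; exact hrpos) hcd hk1 hk2 hd hj1 hj2 he
  · -- D = K - D
    have hKD : K = 2 * D := by omega
    have hl1 : lam K D 1 = 0 := by
      show (if D = 0 then 0 else (K - D) % D) = 0
      rw [if_neg hD.ne', ← hDn]
      exact Nat.mod_self D
    have hi0 : i = 0 := by
      by_contra hne0
      exact hmin 1 (by omega) hl1
    subst hi0
    have e1 : lamS K D (2*0) = K - D := rfl
    have e2 : lam K D (2*0) = D := rfl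
    have e3 : lamS K D (2*0) % lam K D (2*0) = 0 := by
      show (K - D) % D = 0
      rw [← hDn]
      exact Nat.mod_self D
    have hkD : k < D := by omega
    have hcd' : k = c * D + d := by
      have h0 : K - D - lamS K D (2*0) = 0 := by omega
      rw [h0, Nat.mod_zero, e2] at hcd
      exact hcd
    have hc0 : c * D = 0 := by
      rcases Nat.eq_zero_or_pos c with h | h
      · simp [h]
      · have := Nat.le_mul_of_pos_left D h
        omega
    have hK0 : K % (K - D) = 0 := by
      rw [← hDn, hKD]
      exact Nat.mul_mod_left 2 D
    rw [airEntry, dif_neg (by omega), if_pos (by omega)] at he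
    have hjk : j % (K - D) = k % (K - D) := of_decide_eq_true he
    have hkk : k % (K - D) = k := Nat.mod_eq_of_lt (by omega)
    have hjj : j % (K - D) = j - (K - D) := by
      rw [Nat.mod_eq_sub_mod (by omega), Nat.mod_eq_of_lt (by omega)]
    have hjeq : j = (K - D) + k := by omega
    have hg : IsGreatest {j' | j' < j ∧ airEntry K (K - D) j' k = true} k := by
      constructor
      · refine ⟨by omega, ?_⟩
        rw [airEntry, dif_neg (by omega), if_pos (by omega)]
        simp
      · rintro x ⟨hx1, hx2⟩
        rw [airEntry, dif_neg (by omega), if_pos (by omega)] at hx2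
        have hx3 : x % (K - D) = k % (K - D) := of_decide_eq_true hx2
        have hxd := Nat.div_add_mod x (K - D)
        rcases Nat.eq_zero_or_pos (x / (K - D)) with hq | hq
        · rw [hq, Nat.mul_zero] at hxd
          omega
        · have h5 := Nat.le_mul_of_pos_right (K - D) hq
          omega
    have hsup : sSup {j' | j' < j ∧ airEntry K (K - D) j' k = true} = k := hg.csSup_eq
    simp only [dup, hsup, e1, e2]
    omega
  · -- K - D < D
    rcases i with _ | m
    · exfalso
      have e1 : lamS K D (2*0) = K - D := rfl
      have e2 : lam K D (2*0) = D := rfl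
      have e3 : lamS K D (2*0) % lam K D (2*0) = lamS K D (2*0) := by
        show (K - D) % D = K - D
        exact Nat.mod_eq_of_lt hDn
      omega
    · have eqr : (ab K (K-D) (m+1)).1 = lam K D (2*(m+1)) := by
        rw [R2 K D (K-D) hD rfl hn hDn m (fun s hs => hnz s (by omega))]
        show lamS K D (2*m+3) = lam K D (2*(m+1))
        have h : 2*m+3 = (2*(m+1))+1 := by omega
        rw [h, lamS_succ]
      have eqB : (ab K (K-D) m).2 = lamS K D (2*(m+1)) := by
        cases m with
        | zero =>
          show K - D = lamS K D (2*1)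
          have h : 2*1 = 1+1 := by omega
          rw [h, lamS_succ]
          show K - D = (if D = 0 then 0 else (K - D) % D)
          rw [if_neg hD.ne']
          exact (Nat.mod_eq_of_lt hDn).symm
        | succ m' =>
          rw [R2 K D (K-D) hD rfl hn hDn m' (fun s hs => hnz s (by omega))]
          show lam K D (2*m'+3) = lamS K D (2*(m'+1+1))
          have h : 2*(m'+1+1) = (2*m'+3)+1 := by omega
          rw [h, lamS_succ]
      have hBpos : 0 < lamS K D (2*(m+1)) := by
        have h : 2*(m+1) = (2*m+1)+1 := by omega
        rw [h, lamS_succ]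
        exact Nat.pos_of_ne_zero (hnz _ (by omega))
      rw [← eqB] at hk1 hk2 hcd ⊢
      rw [← eqr] at hk2 hcd hd hj1 ⊢
      exact wrap K (K-D) m j k c d hn hnK (by rw [eqB]; exact hBpos)
        (by rw [eqr]; exact hrpos) hcd hk1 hk2 hd hj1 hj2 he
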